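/- Let N ∈ ℕ with N > 13δ. Then for every m ∈ ℕ, every ξ ∈ ∂Γ and every geodesic ray {x(n)}_{n≥0} ∈ [e,ξ], one has U(x(m)⁻¹ξ, N) ⊂ x(m)⁻¹ U(ξ, m). -/

import Mathlib

open Filter Topology MeasureTheory
open scoped ENNReal

namespace HarmonicBoundary

variable {Γ : Type} [Group Γ]

/-- Word length of `g` with respect to a generating set `S`. -/
noncomputable def wl (S : Set Γ) (g : Γ) : ℕ :=
  sInf {n : ℕ | ∃ w : List Γ, w.length = n ∧ (∀ x ∈ w, x ∈ S) ∧ w.prod = g}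

/-- Word metric `d(x,y) = |x⁻¹y|`. -/
noncomputable def wdist (S : Set Γ) (x y : Γ) : ℕ := wl S (x⁻¹ * y)

/-- Gromov product `(x|y)_z = (d(x,z)+d(y,z)-d(x,y))/2`. -/
noncomputable def gp (S : Set Γ) (z x y : Γ) : ℝ :=
  ((wdist S x z : ℝ) + (wdist S y z : ℝ) - (wdist S x y : ℝ)) / 2

/-- `S` is a finite symmetric generating set of `Γ`. -/
def IsGenSet (S : Set Γ) : Prop :=
  S.Finite ∧ (∀ s ∈ S, s⁻¹ ∈ S) ∧ Subgroup.closure S = ⊤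

/-- `Γ` is `δ`-hyperbolic with respect to the word metric of `S`:
`(x|y) ≥ min ((x|z), (y|z)) - δ` for all `x y z`. -/
def IsHyperbolic (S : Set Γ) (δ : ℝ) : Prop :=
  0 ≤ δ ∧ ∀ x y z : Γ, min (gp S 1 x z) (gp S 1 y z) - δ ≤ gp S 1 x y

/-- `Γ` is nonelementary: it has no cyclic subgroup of finite index. -/
def Nonelementary (Γ : Type) [Group Γ] : Prop :=
  ∀ g : Γ, (Subgroup.zpowers g).index = 0

/-- A sequence converges to infinity if `(x_i|x_j) → ∞`. -/
def ConvInf (S : Set Γ) (u : ℕ → Γ) : Prop :=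
  Tendsto (fun p : ℕ × ℕ => gp S 1 (u p.1) (u p.2)) atTop atTop

/-- Two sequences converging to infinity are equivalent if `(x_i|y_j) → ∞`. -/
def EquivSeq (S : Set Γ) (u v : ℕ → Γ) : Prop :=
  Tendsto (fun p : ℕ × ℕ => gp S 1 (u p.1) (v p.2)) atTop atTop

/-- An (abstract model of the) Gromov boundary of `Γ`: the points are exactly the
classes of sequences converging to infinity, modulo the equivalence `EquivSeq`,
together with the natural left action of `Γ`. -/
structure Boundary (Γ : Type) [Group Γ] (S : Set Γ) where
  pt : Type
  cls : (ℕ → Γ) → pt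
  cls_surj : ∀ ξ : pt, ∃ u : ℕ → Γ, ConvInf S u ∧ cls u = ξ
  cls_eq : ∀ u v : ℕ → Γ, ConvInf S u → ConvInf S v → (cls u = cls v ↔ EquivSeq S u v)
  smul : Γ → pt → pt
  smul_cls : ∀ (g : Γ) (u : ℕ → Γ), ConvInf S u → smul g (cls u) = cls fun n => g * u n

/-- Extension of the Gromov product to the boundary:
`(ξ|η) = sup liminf (x_i|y_j)` over sequences representing `ξ` and `η`,
as an extended nonnegative real. -/
noncomputable def bgp {S : Set Γ} (B : Boundary Γ S) (ξ η : B.pt) : ℝ≥0∞ :=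
  ⨆ (u : {u : ℕ → Γ // ConvInf S u ∧ B.cls u = ξ})
    (v : {v : ℕ → Γ // ConvInf S v ∧ B.cls v = η}),
    Filter.liminf (fun p : ℕ × ℕ => ENNReal.ofReal (gp S 1 (u.1 p.1) (v.1 p.2))) atTop

/-- Real-valued Gromov product on the boundary (finite for `ξ ≠ η`). -/
noncomputable def bgpR {S : Set Γ} (B : Boundary Γ S) (ξ η : B.pt) : ℝ := (bgp B ξ η).toReal

/-- The canonical topology of the Gromov boundary: a set is open iff around each of
its points it contains a basic neighbourhood `V_r(p) = {q | (q|p) > r}`. -/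
def btop {S : Set Γ} (B : Boundary Γ S) : TopologicalSpace B.pt where
  IsOpen O := ∀ p ∈ O, ∃ r : ℝ≥0∞, r ≠ ⊤ ∧ {q | r < bgp B q p} ⊆ O
  isOpen_univ := fun p _ => ⟨0, ENNReal.zero_ne_top, fun q _ => trivial⟩
  isOpen_inter := by
    intro A A' hA hA' p hp
    obtain ⟨r1, hr1, h1⟩ := hA p hp.1
    obtain ⟨r2, hr2, h2⟩ := hA' p hp.2
    refine ⟨max r1 r2, (max_lt hr1.lt_top hr2.lt_top).ne, fun q hq => ?_⟩
    have hq' : max r1 r2 < bgp B q p := hq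
    exact ⟨h1 (show r1 < bgp B q p from (le_max_left r1 r2).trans_lt hq'),
      h2 (show r2 < bgp B q p from (le_max_right r1 r2).trans_lt hq')⟩
  isOpen_sUnion := by
    intro s hs p hp
    obtain ⟨t, ht, hpt⟩ := hp
    obtain ⟨r, hr, hsub⟩ := hs t ht p hpt
    exact ⟨r, hr, fun q hq => ⟨t, ht, hsub hq⟩⟩

/-- The attracting fixed point `g⁺ = lim_n gⁿ` of an (infinite order) element. -/
def plusPt {S : Set Γ} (B : Boundary Γ S) (g : Γ) : B.pt := B.cls fun n => g ^ n

/-- The repelling fixed point `g⁻ = lim_n g⁻ⁿ` of an (infinite order) element. -/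
def minusPt {S : Set Γ} (B : Boundary Γ S) (g : Γ) : B.pt := B.cls fun n => g⁻¹ ^ n

/-- A geodesic ray starting at the identity. -/
def IsGeodesicRay (S : Set Γ) (x : ℕ → Γ) : Prop :=
  x 0 = 1 ∧ ∀ m n : ℕ, wdist S (x m) (x n) = Nat.dist m n

/-- A geodesic ray from `e` to the boundary point `ξ`, i.e. an element of `[e,ξ]`. -/
def RayTo {S : Set Γ} (B : Boundary Γ S) (x : ℕ → Γ) (ξ : B.pt) : Prop :=
  IsGeodesicRay S x ∧ ConvInf S x ∧ B.cls x = ξ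

/-- A geodesic segment from `x` to `y` (parametrized on `0,…,d(x,y)`),
i.e. an element of `[x,y]`. -/
def IsGeodesicSeg (S : Set Γ) (x y : Γ) (α : ℕ → Γ) : Prop :=
  α 0 = x ∧ α (wdist S x y) = y ∧
  ∀ m n : ℕ, m ≤ wdist S x y → n ≤ wdist S x y → wdist S (α m) (α n) = Nat.dist m n

/-- The boundary "cylinder" `U(ξ,R)`: all `η` such that for every pair of geodesic
rays `x ∈ [e,ξ]`, `y ∈ [e,η]` one has `lim_n (x(n)|y(n)) > R` (the sequence
`(x(n)|y(n))` is nondecreasing, so the limit exceeds `R` iff some term does). -/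
def Uset {S : Set Γ} (B : Boundary Γ S) (ξ : B.pt) (R : ℝ) : Set B.pt :=
  {η | ∀ x y : ℕ → Γ, RayTo B x ξ → RayTo B y η → ∃ n : ℕ, R < gp S 1 (x n) (y n)}

/-- `C_r(p) = {g | (g|e)_p > r}`. -/
def Cset (S : Set Γ) (p : Γ) (r : ℝ) : Set Γ := {g | r < gp S p g 1}

/-- The `R`-neighbourhood `N(α,R)` of a geodesic segment `α ∈ [x,y]`. -/
def segN (S : Set Γ) (x y : Γ) (α : ℕ → Γ) (R : ℝ) : Set Γ :=
  {g | ∃ i ≤ wdist S x y, (wdist S g (α i) : ℝ) ≤ R}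

/-- The `R`-neighbourhood `N(A,R)` of a subset `A ⊆ Γ`. -/
def setN (S : Set Γ) (A : Set Γ) (R : ℝ) : Set Γ :=
  {g | ∃ a ∈ A, (wdist S g a : ℝ) ≤ R}

/-- `μ` is a nondegenerate probability measure on `Γ` with support contained in `S`:
nonnegative, of total mass one, supported in `S`, and the semigroup generated by its
support is the whole of `Γ`. -/
structure IsRWMeasure (S : Set Γ) (μ : Γ → ℝ) : Prop where
  nonneg : ∀ g, 0 ≤ μ g
  support_subset : ∀ g, μ g ≠ 0 → g ∈ S
  total : ∑' g : Γ, μ g = 1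
  nondeg : ∀ g : Γ, ∃ l : List Γ, l ≠ [] ∧ (∀ x ∈ l, 0 < μ x) ∧ l.prod = g

open Classical in
/-- `n`-step transition probabilities `p⁽ⁿ⁾(x,y) = μ*ⁿ(x⁻¹y)` of the random walk. -/
noncomputable def ptrans (μ : Γ → ℝ) : ℕ → Γ → Γ → ℝ
  | 0 => fun x y => if x = y then 1 else 0
  | n + 1 => fun x y => ∑' z : Γ, ptrans μ n x z * μ (z⁻¹ * y)

/-- Green function `G(x,y) = Σ_n p⁽ⁿ⁾(x,y)`. -/
noncomputable def green (μ : Γ → ℝ) (x y : Γ) : ℝ := ∑' n : ℕ, ptrans μ n x y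

/-- `F(x,y) = G(x,y)/G(y,y)`, the probability that the walk from `x` ever hits `y`. -/
noncomputable def greenF (μ : Γ → ℝ) (x y : Γ) : ℝ := green μ x y / green μ y y

/-- The Martin kernel `K(x,y) = G(x,y)/G(e,y)`. -/
noncomputable def martinK (μ : Γ → ℝ) (x y : Γ) : ℝ := green μ x y / green μ 1 y

open Classical in
/-- Transition probabilities of the walk restricted to `Δ` (killed when leaving `Δ`). -/
noncomputable def ptransR (μ : Γ → ℝ) (Δ : Set Γ) : ℕ → Γ → Γ → ℝ
  | 0 => fun x y => if x = y ∧ x ∈ Δ then 1 else 0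
  | n + 1 => fun x y => if y ∈ Δ then ∑' z : Γ, ptransR μ Δ n x z * μ (z⁻¹ * y) else 0

/-- Green function `G_Δ` of the restricted walk. -/
noncomputable def greenR (μ : Γ → ℝ) (Δ : Set Γ) (x y : Γ) : ℝ := ∑' n : ℕ, ptransR μ Δ n x y

/-- `F_Δ(x,y) = G_Δ(x,y)/G_Δ(y,y)`. -/
noncomputable def greenFR (μ : Γ → ℝ) (Δ : Set Γ) (x y : Γ) : ℝ :=
  greenR μ Δ x y / greenR μ Δ y y

/-- Generating function `G_Δ(x,y|z) = Σ_n p_Δ⁽ⁿ⁾(x,y) zⁿ`. -/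
noncomputable def greenRZ (μ : Γ → ℝ) (Δ : Set Γ) (x y : Γ) (z : ℝ) : ℝ :=
  ∑' n : ℕ, ptransR μ Δ n x y * z ^ n

/-- Spectral radius `ρ(P) = lim_n p⁽ⁿ⁾(e,e)^{1/n}` of the walk. -/
noncomputable def specRad (μ : Γ → ℝ) : ℝ :=
  Filter.limsup (fun n : ℕ => (ptrans μ n 1 1) ^ ((n : ℝ)⁻¹)) atTop

/-- `u` is harmonic on `Λ`: `Σ_h p(g,h) u(h) = u(g)` for `g ∈ Λ`, `p(g,h)=μ(g⁻¹h)`. -/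
def HarmonicOn (μ : Γ → ℝ) (u : Γ → ℝ) (Λ : Set Γ) : Prop :=
  ∀ g ∈ Λ, (∑' h : Γ, μ (g⁻¹ * h) * u h) = u g

/-- `u` vanishes at infinity on `Λ`: `u(g_n) → 0` along sequences in `Λ` with `|g_n|→∞`. -/
def VanishesAtInftyOn (S : Set Γ) (u : Γ → ℝ) (Λ : Set Γ) : Prop :=
  ∀ ε : ℝ, 0 < ε → ∃ M : ℕ, ∀ g ∈ Λ, M ≤ wl S g → |u g| ≤ ε

open Classical in
/-- `r(g) = K(g⁻¹,g⁺)` for infinite order `g`, and `r(g) = 1` for finite order `g`;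
here `Kb` is the boundary extension of the Martin kernel. -/
noncomputable def rfun {S : Set Γ} (B : Boundary Γ S) (Kb : Γ → B.pt → ℝ) (g : Γ) : ℝ :=
  if IsOfFinOrder g then 1 else Kb g⁻¹ (plusPt B g)

/-- The ratio set `r(Γ,∂Γ,ν)`: all `l ≥ 0` such that for every `ε > 0` and every
Borel `A` of positive measure there is `g ∈ Γ` such that
`{ω ∈ gA ∩ A : |d(gν)/dν(ω) − l| < ε}` has positive measure; here the
Radon–Nikodym derivative `d(gν)/dν` is the Martin kernel `Kb g`. -/
def ratioSet {S : Set Γ} (B : Boundary Γ S) [MeasurableSpace B.pt]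
    (ν : Measure B.pt) (Kb : Γ → B.pt → ℝ) : Set ℝ :=
  {l : ℝ | 0 ≤ l ∧ ∀ ε : ℝ, 0 < ε → ∀ A : Set B.pt, MeasurableSet A → 0 < ν A →
    ∃ g : Γ, 0 < ν {ω | ω ∈ A ∧ B.smul g⁻¹ ω ∈ A ∧ |Kb g ω - l| < ε}}

/-- A left invariant finitely additive mean on `Γ`; `Γ` is amenable iff one exists. -/
structure InvariantMean (Γ : Type) [Group Γ] where
  m : Set Γ → ℝ
  nonneg : ∀ A, 0 ≤ m A
  total : m Set.univ = 1
  fin_add : ∀ A B : Set Γ, Disjoint A B → m (A ∪ B) = m A + m B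
  invariant : ∀ (g : Γ) (A : Set Γ), m ((g * ·) ⁻¹' A) = m A


section WL
variable {S : Set Γ}

lemma exists_word (hS : IsGenSet S) (g : Γ) :
    ∃ w : List Γ, (∀ x ∈ w, x ∈ S) ∧ w.prod = g := by
  have hg : g ∈ Subgroup.closure S := hS.2.2 ▸ Subgroup.mem_top g
  induction hg using Subgroup.closure_induction_left with
  | one => exact ⟨[], by simp, by simp⟩
  | mul_left x hx y hy ih =>
    obtain ⟨w, hw1, hw2⟩ := ih
    refine ⟨x :: w, ?_, by simp [hw2]⟩
    intro a ha
    rcases List.mem_cons.mp ha with rfl | ha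
    · exact hx
    · exact hw1 _ ha
  | inv_mul_cancel x hx y hy ih =>
    obtain ⟨w, hw1, hw2⟩ := ih
    refine ⟨x⁻¹ :: w, ?_, by simp [hw2]⟩
    intro a ha
    rcases List.mem_cons.mp ha with rfl | ha
    · exact hS.2.1 _ hx
    · exact hw1 _ ha

lemma wl_spec (hS : IsGenSet S) (g : Γ) :
    ∃ w : List Γ, w.length = wl S g ∧ (∀ x ∈ w, x ∈ S) ∧ w.prod = g := by
  have : {n : ℕ | ∃ w : List Γ, w.length = n ∧ (∀ x ∈ w, x ∈ S) ∧ w.prod = g}.Nonempty := by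
    obtain ⟨w, h1, h2⟩ := exists_word hS g
    exact ⟨w.length, w, rfl, h1, h2⟩
  exact Nat.sInf_mem this

lemma wl_le {g : Γ} {w : List Γ} (h1 : ∀ x ∈ w, x ∈ S) (h2 : w.prod = g) :
    wl S g ≤ w.length :=
  Nat.sInf_le ⟨w, rfl, h1, h2⟩

lemma wl_one : wl S (1 : Γ) = 0 :=
  Nat.le_zero.mp (wl_le (w := []) (by simp) (by simp))

lemma wl_mul_le (hS : IsGenSet S) (g h : Γ) : wl S (g * h) ≤ wl S g + wl S h := by
  obtain ⟨w1, hl1, hm1, hp1⟩ := wl_spec hS g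
  obtain ⟨w2, hl2, hm2, hp2⟩ := wl_spec hS h
  have := wl_le (S := S) (g := g * h) (w := w1 ++ w2)
    (by intro x hx; rcases List.mem_append.mp hx with h | h; exacts [hm1 _ h, hm2 _ h])
    (by simp [hp1, hp2])
  simpa [hl1, hl2] using this

lemma wl_inv (hS : IsGenSet S) (g : Γ) : wl S g⁻¹ = wl S g := by
  have key : ∀ a : Γ, wl S a⁻¹ ≤ wl S a := by
    intro a
    obtain ⟨w, hl, hm, hp⟩ := wl_spec hS a
    have := wl_le (S := S) (g := a⁻¹) (w := (w.map (·⁻¹)).reverse)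
      (by
        intro x hx
        simp only [List.mem_reverse, List.mem_map] at hx
        obtain ⟨y, hy, rfl⟩ := hx
        exact hS.2.1 _ (hm _ hy))
      (by rw [List.prod_reverse_noncomm, List.map_map]; simp [hp])
    simpa [hl] using this
  exact le_antisymm (by simpa using key g) (by simpa using key g⁻¹)

lemma wdist_self (x : Γ) : wdist S x x = 0 := by simp [wdist, wl_one]

lemma wdist_comm (hS : IsGenSet S) (x y : Γ) : wdist S x y = wdist S y x := by
  unfold wdist
  rw [← wl_inv hS (x⁻¹ * y)]; simp [mul_inv_rev]

lemma wdist_triangle (hS : IsGenSet S) (x y z : Γ) :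
    wdist S x z ≤ wdist S x y + wdist S y z := by
  unfold wdist
  have : x⁻¹ * z = (x⁻¹ * y) * (y⁻¹ * z) := by group
  rw [this]; exact wl_mul_le hS _ _

lemma wdist_left (x y g : Γ) : wdist S (g * x) (g * y) = wdist S x y := by
  simp [wdist, mul_assoc]

lemma wdist_one_left (x : Γ) : wdist S 1 x = wl S x := by simp [wdist]

lemma wdist_one_right (hS : IsGenSet S) (x : Γ) : wdist S x 1 = wl S x := by
  rw [wdist_comm hS, wdist_one_left]

lemma natdist_cast (i j : ℕ) : (Nat.dist i j : ℝ) = |(i : ℝ) - (j : ℝ)| := by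
  rcases le_total i j with h | h
  · rw [Nat.dist_eq_sub_of_le h, abs_of_nonpos (sub_nonpos.mpr ((Nat.cast_le (α := ℝ)).mpr h))]
    push_cast [h]; ring
  · rw [Nat.dist_comm, Nat.dist_eq_sub_of_le h, abs_of_nonneg (sub_nonneg.mpr (Nat.cast_le.mpr h))]
    push_cast [h]; ring

lemma gp_comm (hS : IsGenSet S) (x y : Γ) : gp S 1 x y = gp S 1 y x := by
  unfold gp; rw [wdist_comm hS x y]; ring

lemma gp_one_eq (hS : IsGenSet S) (x y : Γ) :
    gp S 1 x y = ((wl S x : ℝ) + (wl S y : ℝ) - (wdist S x y : ℝ)) / 2 := by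
  unfold gp; rw [wdist_one_right hS, wdist_one_right hS]

lemma gp_mul_ge (hS : IsGenSet S) (g a b : Γ) :
    gp S 1 a b - (wl S g : ℝ) ≤ gp S 1 (g * a) (g * b) := by
  have h1 : wl S a ≤ wl S g + wl S (g * a) := by
    have := wl_mul_le hS g⁻¹ (g * a)
    rw [inv_mul_cancel_left, wl_inv hS] at this
    exact this
  have h2 : wl S b ≤ wl S g + wl S (g * b) := by
    have := wl_mul_le hS g⁻¹ (g * b)
    rw [inv_mul_cancel_left, wl_inv hS] at this
    exact this
  rw [gp_one_eq hS, gp_one_eq hS, wdist_left]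
  have c1 := (Nat.cast_le (α := ℝ)).mpr h1
  have c2 := (Nat.cast_le (α := ℝ)).mpr h2
  push_cast at c1 c2 ⊢
  linarith

lemma ray_wl (hx : IsGeodesicRay S x) (n : ℕ) : wl S (x n) = n := by
  rw [← wdist_one_left (S := S) (x n), ← hx.1, hx.2 0 n]
  rw [Nat.dist_eq_sub_of_le (Nat.zero_le n), Nat.sub_zero]

lemma ray_gp (hS : IsGenSet S) {x : ℕ → Γ} (hx : IsGeodesicRay S x) (i j : ℕ) :
    gp S 1 (x i) (x j) = min (i : ℝ) (j : ℝ) := by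
  rw [gp_one_eq hS, ray_wl hx, ray_wl hx, hx.2 i j, natdist_cast]
  rcases le_total (i : ℝ) (j : ℝ) with h | h
  · rw [abs_of_nonpos (by linarith), min_eq_left h]; ring
  · rw [abs_of_nonneg (by linarith), min_eq_right h]; ring

lemma ray_convInf (hS : IsGenSet S) {x : ℕ → Γ} (hx : IsGeodesicRay S x) : ConvInf S x := by
  rw [ConvInf, tendsto_atTop]
  intro C
  obtain ⟨M, hM⟩ := exists_nat_ge C
  rw [eventually_atTop]
  refine ⟨(M, M), fun p hp => ?_⟩
  rw [ray_gp hS hx]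
  have h1 : (M : ℝ) ≤ p.1 := Nat.cast_le.mpr hp.1
  have h2 : (M : ℝ) ≤ p.2 := Nat.cast_le.mpr hp.2
  exact hM.trans (le_min h1 h2)

lemma ray_gp_mono (hS : IsGenSet S) {x y : ℕ → Γ} (hx : IsGeodesicRay S x)
    (hy : IsGeodesicRay S y) : Monotone (fun n => gp S 1 (x n) (y n)) := by
  apply monotone_nat_of_le_succ
  intro n
  show gp S 1 (x n) (y n) ≤ gp S 1 (x (n+1)) (y (n+1))
  rw [gp_one_eq hS, gp_one_eq hS, ray_wl hx, ray_wl hx, ray_wl hy, ray_wl hy]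
  have t1 : wdist S (x (n+1)) (y (n+1)) ≤ wdist S (x (n+1)) (x n) + wdist S (x n) (y (n+1)) :=
    wdist_triangle hS _ _ _
  have t2 : wdist S (x n) (y (n+1)) ≤ wdist S (x n) (y n) + wdist S (y n) (y (n+1)) :=
    wdist_triangle hS _ _ _
  rw [hx.2 (n+1) n] at t1
  rw [hy.2 n (n+1)] at t2
  have d1 : Nat.dist (n+1) n = 1 := by simp [Nat.dist]
  have d2 : Nat.dist n (n+1) = 1 := by simp [Nat.dist]
  rw [d1] at t1; rw [d2] at t2
  have hc : (wdist S (x (n+1)) (y (n+1)) : ℝ) ≤ (wdist S (x n) (y n) : ℝ) + 2 := by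
    have : wdist S (x (n+1)) (y (n+1)) ≤ wdist S (x n) (y n) + 2 := by omega
    exact_mod_cast this
  push_cast
  linarith

lemma convInf_mul (hS : IsGenSet S) {u : ℕ → Γ} (hu : ConvInf S u) (g : Γ) :
    ConvInf S (fun n => g * u n) := by
  have h := tendsto_atTop_add_const_right atTop (-(wl S g : ℝ)) hu
  apply tendsto_atTop_mono _ h
  intro p
  have := gp_mul_ge hS g (u p.1) (u p.2)
  simp only [sub_eq_add_neg] at this ⊢
  exact this

lemma equivSeq_mul (hS : IsGenSet S) {u v : ℕ → Γ} (huv : EquivSeq S u v) (g : Γ) :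
    EquivSeq S (fun n => g * u n) (fun n => g * v n) := by
  have h := tendsto_atTop_add_const_right atTop (-(wl S g : ℝ)) huv
  apply tendsto_atTop_mono _ h
  intro p
  have := gp_mul_ge hS g (u p.1) (v p.2)
  simp only [sub_eq_add_neg] at this ⊢
  exact this

lemma tendsto_diag : Tendsto (fun n : ℕ => (n, n)) atTop (atTop : Filter (ℕ × ℕ)) := by
  rw [← Filter.prod_atTop_atTop_eq]
  exact tendsto_id.prodMk tendsto_id

lemma ball_finite (hS : IsGenSet S) : ∀ k : ℕ, {g : Γ | wl S g ≤ k}.Finite := by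
  intro k
  induction k with
  | zero =>
    refine Set.Finite.subset (Set.finite_singleton 1) ?_
    intro g hg
    simp only [Set.mem_setOf_eq] at hg
    obtain ⟨w, hl, _, hp⟩ := wl_spec hS g
    have : w.length = 0 := by omega
    rw [List.length_eq_zero_iff] at this
    simp [this] at hp
    simp [← hp]
  | succ k ih =>
    refine Set.Finite.subset (((Set.Finite.image2 (· * ·) hS.1 ih).insert 1)) ?_
    intro g hg
    simp only [Set.mem_setOf_eq] at hg
    obtain ⟨w, hl, hm, hp⟩ := wl_spec hS g
    match w, hl with
    | [], _ => simp at hp; simp [← hp]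
    | a :: t, hl =>
      right
      refine ⟨a, hm a (by simp), t.prod, ?_, by rw [← hp]; simp⟩
      have ht : wl S t.prod ≤ t.length := wl_le (fun x hx => hm x (by simp [hx])) rfl
      simp only [List.length_cons] at hl
      simp only [Set.mem_setOf_eq]
      omega

end WL

section Seg
variable {S : Set Γ}

lemma seg_wdist (hS : IsGenSet S) {w : List Γ} (hm : ∀ x ∈ w, x ∈ S)
    (hlen : w.length = wl S w.prod) {i j : ℕ} (hij : i ≤ j) (hj : j ≤ w.length) :
    wdist S ((w.take i).prod) ((w.take j).prod) = j - i := by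
  have hsplit : w.take j = w.take i ++ (w.drop i).take (j - i) := by
    rw [← List.take_add]
    congr 1
    omega
  have hmid : ((w.take i).prod)⁻¹ * (w.take j).prod = ((w.drop i).take (j - i)).prod := by
    rw [hsplit, List.prod_append]
    group
  have hmidlen : ((w.drop i).take (j - i)).length = j - i := by
    simp only [List.length_take, List.length_drop]
    omega
  -- upper bound
  have hup : wdist S ((w.take i).prod) ((w.take j).prod) ≤ j - i := by
    rw [wdist, hmid]
    have := wl_le (S := S) (g := ((w.drop i).take (j - i)).prod)
      (w := (w.drop i).take (j - i))
      (fun x hx => hm x (List.mem_of_mem_drop (List.mem_of_mem_take hx))) rfl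
    omega
  -- lower bound
  have h1 : wl S ((w.take i).prod) ≤ i := by
    have := wl_le (S := S) (g := (w.take i).prod) (w := w.take i)
      (fun x hx => hm x (List.mem_of_mem_take hx)) rfl
    have hti : (w.take i).length ≤ i := by simp [List.length_take]
    omega
  have h3 : wl S ((w.drop j).prod) ≤ w.length - j := by
    have := wl_le (S := S) (g := (w.drop j).prod) (w := w.drop j)
      (fun x hx => hm x (List.mem_of_mem_drop hx)) rfl
    simp only [List.length_drop] at this
    omega
  have hdecomp : w.prod = (w.take i).prod * (((w.take i).prod)⁻¹ * (w.take j).prod)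
      * (w.drop j).prod := by
    have : (w.take j).prod * (w.drop j).prod = w.prod := by
      rw [← List.prod_append, List.take_append_drop]
    rw [← this]
    group
  have hlow : w.length ≤ i + wdist S ((w.take i).prod) ((w.take j).prod) + (w.length - j) := by
    have t1 : wl S w.prod ≤ wl S ((w.take i).prod * (((w.take i).prod)⁻¹ * (w.take j).prod))
        + wl S ((w.drop j).prod) := by
      conv_lhs => rw [hdecomp]
      exact wl_mul_le hS _ _
    have t2 : wl S ((w.take i).prod * (((w.take i).prod)⁻¹ * (w.take j).prod))
        ≤ wl S ((w.take i).prod) + wl S (((w.take i).prod)⁻¹ * (w.take j).prod) :=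
      wl_mul_le hS _ _
    have : wdist S ((w.take i).prod) ((w.take j).prod)
        = wl S (((w.take i).prod)⁻¹ * (w.take j).prod) := rfl
    omega
  omega

lemma exists_rayTo {δ : ℝ} (hS : IsGenSet S) (hδ : IsHyperbolic S δ)
    (B : Boundary Γ S) (η : B.pt) : ∃ b : ℕ → Γ, RayTo B b η := by
  classical
  obtain ⟨u, hu, hcu⟩ := B.cls_surj η
  set L : ℕ → ℕ := fun n => wl S (u n) with hL
  have hgpuu : ∀ n, gp S 1 (u n) (u n) = (L n : ℝ) := by
    intro n
    rw [gp_one_eq hS, wdist_self]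
    push_cast
    ring
  have hLtends : Tendsto L atTop atTop := by
    rw [← tendsto_natCast_atTop_iff (R := ℝ)]
    have h3 := hu.comp tendsto_diag
    have heq : ((fun p : ℕ × ℕ => gp S 1 (u p.1) (u p.2)) ∘ fun n => (n, n))
        = fun n => (L n : ℝ) := by
      funext n
      simp [Function.comp, hgpuu n]
    rwa [heq] at h3
  choose w hwlen hwmem hwprod using fun n => wl_spec hS (u n)
  set σ : ℕ → ℕ → Γ := fun n k => ((w n).take k).prod with hσ
  have hwlen' : ∀ n, (w n).length = wl S ((w n).prod) := by
    intro n; rw [hwprod n, hwlen n]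
  have hlenL : ∀ n, (w n).length = L n := fun n => hwlen n
  have hσd : ∀ n i j, i ≤ j → j ≤ L n → wdist S (σ n i) (σ n j) = j - i := by
    intro n i j hij hj
    exact seg_wdist hS (hwmem n) (hwlen' n) hij (by rw [hlenL n]; exact hj)
  have hσ0 : ∀ n, σ n 0 = 1 := by intro n; simp [hσ]
  have hσtop : ∀ n, σ n (L n) = u n := by
    intro n
    simp only [hσ, ← hlenL n, List.take_length]
    exact hwprod n
  have hσwl : ∀ n k, k ≤ L n → wl S (σ n k) = k := by
    intro n k hk
    have := hσd n 0 k (Nat.zero_le k) hk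
    rw [hσ0 n, wdist_one_left] at this
    omega
  set 𝒰 : Ultrafilter ℕ := Filter.hyperfilter ℕ with h𝒰
  have hatTop : ∀ {s : Set ℕ}, s ∈ (atTop : Filter ℕ) → s ∈ 𝒰 := by
    intro s hs
    exact Filter.hyperfilter_le_cofinite (Nat.cofinite_eq_atTop ▸ hs)
  have key : ∀ k : ℕ, ∃ g : Γ, {n | σ n k = g} ∈ 𝒰 := by
    intro k
    have hmem : {g : Γ | wl S g ≤ k} ∈ Ultrafilter.map (fun n => σ n k) 𝒰 := by
      have hsub : {n | k ≤ L n} ⊆ (fun n => σ n k) ⁻¹' {g : Γ | wl S g ≤ k} := by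
        intro n hn
        simp only [Set.mem_preimage, Set.mem_setOf_eq]
        rw [hσwl n k hn]
      rw [Ultrafilter.mem_map]
      exact Filter.mem_of_superset
        (hatTop (show {n | k ≤ L n} ∈ (atTop : Filter ℕ) from hLtends.eventually_ge_atTop k)) hsub
    obtain ⟨g, _, hpure⟩ := Ultrafilter.eq_pure_of_finite_mem (ball_finite hS k) hmem
    refine ⟨g, ?_⟩
    have : {g} ∈ Ultrafilter.map (fun n => σ n k) 𝒰 := by
      rw [hpure]
      exact Set.mem_singleton g
    exact Ultrafilter.mem_map.mp this
  choose b hb using key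
  have hbray : IsGeodesicRay S b := by
    constructor
    · obtain ⟨n, hn⟩ := Ultrafilter.nonempty_of_mem (hb 0)
      simp only [Set.mem_setOf_eq] at hn
      rw [← hn, hσ0 n]
    · intro i j
      have hmax : {n | max i j ≤ L n} ∈ 𝒰 := hatTop (hLtends.eventually_ge_atTop (max i j))
      obtain ⟨n, hn⟩ := Ultrafilter.nonempty_of_mem
        (Filter.inter_mem (hb i) (Filter.inter_mem (hb j) hmax))
      obtain ⟨hni, hnj, hnmax⟩ := hn
      simp only [Set.mem_setOf_eq] at hni hnj hnmax
      rw [← hni, ← hnj]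
      rcases le_total i j with h | h
      · rw [hσd n i j h (le_trans (le_max_right i j) hnmax),
          Nat.dist_eq_sub_of_le h]
      · rw [wdist_comm hS, hσd n j i h (le_trans (le_max_left i j) hnmax),
          Nat.dist_comm, Nat.dist_eq_sub_of_le h]
  have hbconv : ConvInf S b := ray_convInf hS hbray
  have hbη : B.cls b = η := by
    rw [← hcu]
    rw [B.cls_eq b u hbconv hu]
    rw [EquivSeq, tendsto_atTop]
    intro C
    obtain ⟨R', hR'⟩ := exists_nat_ge (C + δ)
    have huev := hu.eventually_ge_atTop ((R' : ℝ))
    rw [eventually_atTop] at huev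
    obtain ⟨⟨M1, M2⟩, hM⟩ := huev
    rw [eventually_atTop]
    refine ⟨(R', max M1 M2), fun p hp => ?_⟩
    obtain ⟨hp1, hp2⟩ := hp
    simp only at hp1 hp2
    -- pick n₀
    have hset : {n | σ n p.1 = b p.1} ∩ ({n | p.1 ≤ L n} ∩ {n | max M1 M2 ≤ n}) ∈ 𝒰 :=
      Filter.inter_mem (hb p.1)
        (Filter.inter_mem (hatTop (hLtends.eventually_ge_atTop p.1))
          (hatTop (eventually_ge_atTop (max M1 M2))))
    obtain ⟨n₀, hn₀⟩ := Ultrafilter.nonempty_of_mem hset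
    obtain ⟨hn1, hn2, hn3⟩ := hn₀
    simp only [Set.mem_setOf_eq] at hn1 hn2 hn3
    have hgpb : gp S 1 (b p.1) (u n₀) = (p.1 : ℝ) := by
      rw [gp_one_eq hS, ← hn1, hσwl n₀ p.1 hn2, ← hσtop n₀]
      rw [hσd n₀ p.1 (L n₀) hn2 (le_refl _), hσwl n₀ (L n₀) (le_refl _)]
      push_cast [hn2]
      ring
    have hgpu : (R' : ℝ) ≤ gp S 1 (u p.2) (u n₀) := by
      refine hM (p.2, n₀) ⟨le_trans (le_max_left M1 M2) hp2, le_trans (le_max_right M1 M2) hn3⟩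
    have hmin := hδ.2 (b p.1) (u p.2) (u n₀)
    have hbig : (R' : ℝ) ≤ min (gp S 1 (b p.1) (u n₀)) (gp S 1 (u p.2) (u n₀)) := by
      refine le_min ?_ hgpu
      rw [hgpb]
      exact_mod_cast hp1
    linarith
  exact ⟨b, hbray, hbconv, hbη⟩

end Seg

theorem cylinder_translation
    (Γ : Type) [Group Γ] (S : Set Γ) (δ : ℝ)
    (hS : IsGenSet S) (hδ : IsHyperbolic S δ) (hne : Nonelementary Γ)
    (B : Boundary Γ S)
    (N : ℕ) (hN : 13 * δ < (N : ℝ)) :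
    ∀ (m : ℕ) (ξ : B.pt) (x : ℕ → Γ), RayTo B x ξ →
      Uset B (B.smul (x m)⁻¹ ξ) (N : ℝ) ⊆ (B.smul (x m)⁻¹) '' Uset B ξ (m : ℝ) := by
  intro m ξ x hx η hη
  obtain ⟨hxray, hxconv, hxcls⟩ := hx
  obtain ⟨b, hbray, hbconv, hbcls⟩ := exists_rayTo hS hδ B η
  set g : Γ := x m with hg
  have hwlg : wl S g = m := ray_wl hxray m
  have hwlginv : wl S g⁻¹ = m := by rw [wl_inv hS, hwlg]
  set v : ℕ → Γ := fun j => g * b j with hv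
  have hvconv : ConvInf S v := convInf_mul hS hbconv g
  have hvcls : B.cls v = B.smul g η := by
    rw [← hbcls, B.smul_cls g b hbconv]
  refine ⟨B.smul g η, ?_, ?_⟩
  swap
  · rw [← hvcls, B.smul_cls g⁻¹ v hvconv, ← hbcls]
    congr 1
    funext n
    simp [hv]
  -- main goal: B.smul g η ∈ Uset B ξ m
  simp only [Uset, Set.mem_setOf_eq]
  intro x' y' hx' hy'
  obtain ⟨hx'ray, hx'conv, hx'cls⟩ := hx'
  obtain ⟨hy'ray, hy'conv, hy'cls⟩ := hy'
  -- the ray a from e to (x m)⁻¹ ξ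
  set a : ℕ → Γ := fun j => g⁻¹ * x (m + j) with ha
  have haray : IsGeodesicRay S a := by
    constructor
    · simp [ha, hg]
    · intro i j
      have h1 : wdist S (a i) (a j) = wdist S (x (m + i)) (x (m + j)) :=
        wdist_left (x (m + i)) (x (m + j)) g⁻¹
      rw [h1, hxray.2]
      simp [Nat.dist]
      omega
  have haconv : ConvInf S a := ray_convInf hS haray
  have hacls : B.cls a = B.smul g⁻¹ ξ := by
    rw [← hxcls, B.smul_cls g⁻¹ x hxconv]
    rw [B.cls_eq a _ haconv (convInf_mul hS hxconv g⁻¹)]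
    rw [EquivSeq, tendsto_atTop]
    intro C
    obtain ⟨M, hM⟩ := exists_nat_ge C
    rw [eventually_atTop]
    refine ⟨(M, m + M), fun p hp => ?_⟩
    obtain ⟨hp1, hp2⟩ := hp
    have hkey := gp_mul_ge hS g⁻¹ (x (m + p.1)) (x p.2)
    rw [hwlginv, ray_gp hS hxray] at hkey
    have h1 : (m : ℝ) + M ≤ ((m + p.1 : ℕ) : ℝ) := by
      have := (Nat.cast_le (α := ℝ)).mpr (hp1 : M ≤ p.1)
      push_cast
      linarith
    have h2 : (m : ℝ) + M ≤ (p.2 : ℝ) := by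
      have := (Nat.cast_le (α := ℝ)).mpr (hp2 : m + M ≤ p.2)
      push_cast at this
      linarith
    have hmin : (m : ℝ) + M ≤ min ((m + p.1 : ℕ) : ℝ) (p.2 : ℝ) := le_min h1 h2
    show C ≤ gp S 1 (g⁻¹ * x (m + p.1)) (g⁻¹ * x p.2)
    linarith
  obtain ⟨n₀, hn₀⟩ := hη a b ⟨haray, haconv, hacls⟩ ⟨hbray, hbconv, hbcls⟩
  have hmono := ray_gp_mono hS haray hbray
  have hNab : ∀ j, n₀ ≤ j → (N : ℝ) < gp S 1 (a j) (b j) :=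
    fun j hj => lt_of_lt_of_le hn₀ (hmono hj)
  have hδN : δ < (N : ℝ) := by linarith [hδ.1]
  have hga0 : ∀ j : ℕ, gp S 1 g⁻¹ (a j) = 0 := by
    intro j
    have hd : wdist S g⁻¹ (a j) = m + j := by
      have : wdist S g⁻¹ (a j) = wl S (x (m + j)) := by
        unfold wdist
        congr 1
        show (g⁻¹)⁻¹ * (g⁻¹ * x (m + j)) = x (m + j)
        group
      rw [this, ray_wl hxray]
    rw [gp_one_eq hS, hwlginv, ray_wl haray, hd]
    push_cast
    ring
  have hstep1 : ∀ j, n₀ ≤ j → gp S 1 g⁻¹ (b j) ≤ δ := by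
    intro j hj
    have hmin2 : min (gp S 1 g⁻¹ (b j)) (gp S 1 (a j) (b j)) ≤ δ := by
      have := hδ.2 g⁻¹ (a j) (b j)
      have h0 := hga0 j
      linarith
    rcases min_le_iff.mp hmin2 with h | h
    · exact h
    · linarith [hNab j hj]
  have hstep2 : ∀ j, n₀ ≤ j → (m : ℝ) + N - δ ≤ gp S 1 (x (m + j)) (v j) := by
    intro j hj
    have hDB : wdist S g⁻¹ (b j) = wl S (v j) := by
      unfold wdist
      congr 1
      show (g⁻¹)⁻¹ * b j = g * b j
      group
    have hDAB : wdist S (x (m + j)) (v j) = wdist S (a j) (b j) := by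
      unfold wdist
      congr 1
      show (x (m + j))⁻¹ * (g * b j) = (g⁻¹ * x (m + j))⁻¹ * b j
      group
    have e1 : gp S 1 g⁻¹ (b j) = ((m : ℝ) + j - (wdist S g⁻¹ (b j) : ℝ)) / 2 := by
      rw [gp_one_eq hS, hwlginv, ray_wl hbray]
    have e2 : gp S 1 (a j) (b j) = ((j : ℝ) + j - (wdist S (a j) (b j) : ℝ)) / 2 := by
      rw [gp_one_eq hS, ray_wl haray, ray_wl hbray]
    have e3 : gp S 1 (x (m + j)) (v j)
        = (((m : ℝ) + j) + (wdist S g⁻¹ (b j) : ℝ) - (wdist S (a j) (b j) : ℝ)) / 2 := by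
      rw [gp_one_eq hS, ray_wl hxray, ← hDB, hDAB]
      push_cast
      ring
    have hs1 := hstep1 j hj
    have hs2 := hNab j hj
    rw [e1] at hs1
    rw [e2] at hs2
    rw [e3]
    linarith
  have hE2 : EquivSeq S v y' := (B.cls_eq v y' hvconv hy'conv).mp (by rw [hvcls, hy'cls])
  have hE1 : EquivSeq S x' x := (B.cls_eq x' x hx'conv hxconv).mp (by rw [hx'cls, hxcls])
  have h2ev := hE2.eventually_ge_atTop ((m : ℝ) + N)
  rw [eventually_atTop] at h2ev
  obtain ⟨⟨M3, M4⟩, hM34⟩ := h2ev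
  have h1ev := hE1.eventually_ge_atTop ((m : ℝ) + N)
  rw [eventually_atTop] at h1ev
  obtain ⟨⟨M1, M2⟩, hM12⟩ := h1ev
  set jj : ℕ := max n₀ (max M3 N) with hjjdef
  set nn : ℕ := max M1 (max M2 (max M4 (m + N))) with hnndef
  refine ⟨nn, ?_⟩
  have hj0 : n₀ ≤ jj := le_max_left _ _
  have h5 := hstep2 jj hj0
  have hnnge : m + N ≤ nn :=
    le_trans (le_max_right M4 (m + N)) (le_trans (le_max_right M2 _) (le_max_right M1 _))
  have hjjN : N ≤ jj := le_trans (le_max_right M3 N) (le_max_right n₀ _)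
  have h6 : (m : ℝ) + N ≤ gp S 1 (x nn) (x (m + jj)) := by
    rw [ray_gp hS hxray]
    refine le_min ?_ ?_
    · have := (Nat.cast_le (α := ℝ)).mpr hnnge
      push_cast at this
      linarith
    · have := (Nat.cast_le (α := ℝ)).mpr (Nat.add_le_add_left hjjN m)
      push_cast at this
      push_cast
      linarith
  have h7 : (m : ℝ) + N - 2 * δ ≤ gp S 1 (x nn) (v jj) := by
    have hh := hδ.2 (x nn) (v jj) (x (m + jj))
    have hcomm : gp S 1 (v jj) (x (m + jj)) = gp S 1 (x (m + jj)) (v jj) := gp_comm hS _ _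
    have hminlow : (m : ℝ) + N - δ
        ≤ min (gp S 1 (x nn) (x (m + jj))) (gp S 1 (v jj) (x (m + jj))) := by
      refine le_min (by linarith [hδ.1]) ?_
      rw [hcomm]
      linarith
    linarith
  have h8 : (m : ℝ) + N ≤ gp S 1 (v jj) (y' nn) := by
    refine hM34 (jj, nn) ⟨le_trans (le_max_left M3 N) (le_max_right n₀ _), ?_⟩
    exact le_trans (le_max_left M4 _) (le_trans (le_max_right M2 _) (le_max_right M1 _))
  have h9 : (m : ℝ) + N - 3 * δ ≤ gp S 1 (x nn) (y' nn) := by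
    have hh := hδ.2 (x nn) (y' nn) (v jj)
    have hcomm : gp S 1 (y' nn) (v jj) = gp S 1 (v jj) (y' nn) := gp_comm hS _ _
    have hminlow : (m : ℝ) + N - 2 * δ
        ≤ min (gp S 1 (x nn) (v jj)) (gp S 1 (y' nn) (v jj)) := by
      refine le_min h7 ?_
      rw [hcomm]
      linarith [hδ.1]
    linarith
  have h10 : (m : ℝ) + N ≤ gp S 1 (x' nn) (x nn) :=
    hM12 (nn, nn) ⟨le_max_left _ _, le_trans (le_max_left M2 _) (le_max_right M1 _)⟩
  have h11 := hδ.2 (x' nn) (y' nn) (x nn)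
  have hcomm : gp S 1 (y' nn) (x nn) = gp S 1 (x nn) (y' nn) := gp_comm hS _ _
  have hminlow : (m : ℝ) + N - 3 * δ
      ≤ min (gp S 1 (x' nn) (x nn)) (gp S 1 (y' nn) (x nn)) := by
    refine le_min (by linarith [hδ.1]) ?_
    rw [hcomm]
    exact h9
  linarith [hδ.1]


end HarmonicBoundary
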